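/- Assume the pair (A,B) is exponentially stabilizable and (A,C) is exponentially detectable (finite-dimensional setting: there exist K, L with A+BK and A+LC Hurwitz). Then there exists a constant c > 0, independent of T, such that for every T > 0 and every solution (y, λ) of the coupled Hamiltonian system ẏ = Ay + BQ⁻¹B*λ, λ̇ = C*Cy - A*λ on [0,T], one has ‖y(T)‖ + ‖λ(0)‖ ≤ c (‖y(0)‖ + ‖λ(T)‖). -/

import Mathlib

set_option maxHeartbeats 1000000
set_option synthInstance.maxHeartbeats 400000

open scoped RealInnerProductSpace
open ContinuousLinearMap NormedSpace intervalIntegral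


set_option maxHeartbeats 1000000 in
set_option synthInstance.maxHeartbeats 400000 in
lemma ode_est {X : Type*} [NormedAddCommGroup X] [NormedSpace ℝ X] [CompleteSpace X]
    (M : X →L[ℝ] X) (c ν : ℝ) (hc : 0 < c) (hν : 0 < ν)
    (hM : ∀ t : ℝ, 0 ≤ t → ‖exp (t • M)‖ ≤ c * Real.exp (-ν * t))
    (T : ℝ) (hT : 0 < T) (y f : ℝ → X)
    (hf : ContinuousOn f (Set.Icc 0 T))
    (hy : ∀ t ∈ Set.Icc (0:ℝ) T, HasDerivAt y (M (y t) + f t) t) :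
    ‖y T‖ ≤ c * ‖y 0‖ + ∫ s in (0:ℝ)..T, c * Real.exp (-ν * (T - s)) * ‖f s‖ := by
  letI : NormedAlgebra ℚ (X →L[ℝ] X) := .restrictScalars ℚ ℝ (X →L[ℝ] X)
  set N := -M with hN
  have key : ∀ s t : ℝ, exp (t • M) * exp (s • N) = exp ((t - s) • M) := by
    intro s t
    rw [hN, smul_neg, ← neg_smul,
      ← exp_add_of_commute (((Commute.refl M).smul_left t).smul_right (-s)), ← add_smul,
      ← sub_eq_add_neg]
  -- derivative of z
  have hz : ∀ t ∈ Set.Icc (0:ℝ) T,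
      HasDerivAt (fun t => exp (t • N) (y t)) (exp (t • N) (f t)) t := by
    intro t ht
    have h1 : HasDerivAt (fun u : ℝ => exp (u • N)) (exp (t • N) * N) t :=
      hasDerivAt_exp_smul_const N t
    have h2 := h1.clm_apply (hy t ht)
    convert h2 using 1
    rw [ContinuousLinearMap.mul_apply, map_add]
    simp [hN, neg_add_cancel_left]
  -- integrand continuity
  have hexpcont : ∀ M₀ : X →L[ℝ] X, Continuous fun s : ℝ => exp (s • M₀) := fun M₀ =>
    exp_continuous.comp (continuous_id.smul continuous_const)
  have hicont : ContinuousOn (fun s : ℝ => exp (s • N) (f s)) (Set.Icc 0 T) :=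
    ContinuousOn.clm_apply ((hexpcont N).continuousOn) hf
  have hii : IntervalIntegrable (fun s : ℝ => exp (s • N) (f s)) MeasureTheory.volume 0 T := by
    apply ContinuousOn.intervalIntegrable
    rwa [Set.uIcc_of_le hT.le]
  have hftc : ∫ s in (0:ℝ)..T, exp (s • N) (f s) =
      exp (T • N) (y T) - exp ((0:ℝ) • N) (y 0) := by
    apply integral_eq_sub_of_hasDerivAt
    · intro t ht
      rw [Set.uIcc_of_le hT.le] at ht
      exact hz t ht
    · exact hii
  have h0 : exp ((0:ℝ) • N) (y 0) = y 0 := by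
    rw [zero_smul, exp_zero, ContinuousLinearMap.one_apply]
  -- recover y T
  have hyT : y T = exp (T • M) (y 0) + ∫ s in (0:ℝ)..T, exp ((T - s) • M) (f s) := by
    have h3 : ∫ s in (0:ℝ)..T, exp ((T - s) • M) (f s)
        = exp (T • M) (∫ s in (0:ℝ)..T, exp (s • N) (f s)) := by
      rw [← ContinuousLinearMap.intervalIntegral_comp_comm _ hii]
      apply integral_congr
      intro s _
      show exp ((T - s) • M) (f s) = exp (T • M) (exp (s • N) (f s))
      rw [← key s T, ContinuousLinearMap.mul_apply]
    rw [h3, hftc, h0, map_sub]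
    have h4 : exp (T • M) (exp (T • N) (y T)) = y T := by
      rw [← ContinuousLinearMap.mul_apply, key, sub_self, zero_smul, exp_zero,
        ContinuousLinearMap.one_apply]
    rw [h4]
    abel
  rw [hyT]
  have hb1 : ‖exp (T • M) (y 0)‖ ≤ c * ‖y 0‖ := by
    calc ‖exp (T • M) (y 0)‖ ≤ ‖exp (T • M)‖ * ‖y 0‖ := le_opNorm _ _
    _ ≤ (c * Real.exp (-ν * T)) * ‖y 0‖ := by
        apply mul_le_mul_of_nonneg_right (hM T hT.le) (norm_nonneg _)
    _ ≤ c * ‖y 0‖ := by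
        apply mul_le_mul_of_nonneg_right _ (norm_nonneg _)
        nlinarith [Real.exp_le_one_iff.2 (by nlinarith : -ν * T ≤ 0), hc.le]
  have hgii : IntervalIntegrable (fun s => c * Real.exp (-ν * (T - s)) * ‖f s‖)
      MeasureTheory.volume 0 T := by
    apply ContinuousOn.intervalIntegrable
    rw [Set.uIcc_of_le hT.le]
    exact (continuous_const.mul ((Real.continuous_exp.comp (by fun_prop)))).continuousOn.mul hf.norm
  have hb2 : ‖∫ s in (0:ℝ)..T, exp ((T - s) • M) (f s)‖ ≤
      ∫ s in (0:ℝ)..T, c * Real.exp (-ν * (T - s)) * ‖f s‖ := by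
    have := norm_integral_le_of_norm_le (μ := MeasureTheory.volume) (a := (0:ℝ)) (b := T)
      (f := fun s => exp ((T - s) • M) (f s))
      (g := fun s => c * Real.exp (-ν * (T - s)) * ‖f s‖) hT.le ?_ hgii
    · exact this
    · filter_upwards with t ht
      show ‖exp ((T - t) • M) (f t)‖ ≤ c * Real.exp (-ν * (T - t)) * ‖f t‖
      calc ‖exp ((T - t) • M) (f t)‖ ≤ ‖exp ((T - t) • M)‖ * ‖f t‖ := le_opNorm _ _
      _ ≤ c * Real.exp (-ν * (T - t)) * ‖f t‖ :=
          mul_le_mul_of_nonneg_right (hM _ (by linarith [ht.2])) (norm_nonneg _)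
  calc ‖exp (T • M) (y 0) + ∫ s in (0:ℝ)..T, exp ((T - s) • M) (f s)‖
      ≤ ‖exp (T • M) (y 0)‖ + ‖∫ s in (0:ℝ)..T, exp ((T - s) • M) (f s)‖ := norm_add_le _ _
    _ ≤ c * ‖y 0‖ + ∫ s in (0:ℝ)..T, c * Real.exp (-ν * (T - s)) * ‖f s‖ := add_le_add hb1 hb2



lemma exp_young (c ν ε T : ℝ) (hc : 0 < c) (hν : 0 < ν) (hε : 0 < ε) (hT : 0 < T)
    (φ : ℝ → ℝ) (hφ : ContinuousOn φ (Set.Icc 0 T)) (hφ0 : ∀ s ∈ Set.Icc 0 T, 0 ≤ φ s) :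
    (∫ s in (0:ℝ)..T, c * Real.exp (-ν * (T - s)) * φ s) ≤
      c * ε * (∫ s in (0:ℝ)..T, (φ s) ^ 2) + c / (4 * ε * ν) := by
  have hexp : ∀ s : ℝ, Continuous fun s : ℝ => Real.exp (-ν * (T - s)) := fun _ => by fun_prop
  have h1 : IntervalIntegrable (fun s => c * Real.exp (-ν * (T - s)) * φ s)
      MeasureTheory.volume 0 T := by
    apply ContinuousOn.intervalIntegrable
    rw [Set.uIcc_of_le hT.le]
    exact (continuous_const.mul (hexp 0)).continuousOn.mul hφ
  have h2 : IntervalIntegrable (fun s => c * ε * (φ s) ^ 2 + c / (4 * ε) * Real.exp (-ν * (T - s)))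
      MeasureTheory.volume 0 T := by
    apply ContinuousOn.intervalIntegrable
    rw [Set.uIcc_of_le hT.le]
    exact ((continuous_const.continuousOn.mul (hφ.pow 2))).add
      (continuous_const.continuousOn.mul (hexp 0).continuousOn)
  have step1 : (∫ s in (0:ℝ)..T, c * Real.exp (-ν * (T - s)) * φ s) ≤
      ∫ s in (0:ℝ)..T, (c * ε * (φ s) ^ 2 + c / (4 * ε) * Real.exp (-ν * (T - s))) := by
    apply integral_mono_on hT.le h1 h2
    intro s hs
    have hes : Real.exp (-ν * (T - s)) ≤ 1 := by
      rw [Real.exp_le_one_iff]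
      nlinarith [hs.2]
    have hep : (0:ℝ) < Real.exp (-ν * (T - s)) := Real.exp_pos _
    have hφs := hφ0 s hs
    have key : φ s ≤ ε * φ s ^ 2 + 1 / (4 * ε) := by
      rw [← sub_nonneg]
      have heq : ε * φ s ^ 2 + 1 / (4 * ε) - φ s = (2 * ε * φ s - 1) ^ 2 / (4 * ε) := by
        field_simp
        ring
      rw [heq]
      positivity
    calc c * Real.exp (-ν * (T - s)) * φ s
        ≤ c * Real.exp (-ν * (T - s)) * (ε * φ s ^ 2 + 1 / (4 * ε)) :=
          mul_le_mul_of_nonneg_left key (by positivity)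
      _ = c * ε * (Real.exp (-ν * (T - s)) * φ s ^ 2)
          + c / (4 * ε) * Real.exp (-ν * (T - s)) := by ring
      _ ≤ c * ε * φ s ^ 2 + c / (4 * ε) * Real.exp (-ν * (T - s)) := by
          have h5 : Real.exp (-ν * (T - s)) * φ s ^ 2 ≤ φ s ^ 2 := by
            nlinarith [sq_nonneg (φ s)]
          exact add_le_add_left (mul_le_mul_of_nonneg_left h5 (by positivity)) _
  have hint : (∫ s in (0:ℝ)..T, Real.exp (-ν * (T - s))) ≤ 1 / ν := by
    have hftc : (∫ s in (0:ℝ)..T, Real.exp (-ν * (T - s))) =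
        Real.exp (-ν * (T - T)) / ν - Real.exp (-ν * (T - 0)) / ν := by
      apply integral_eq_sub_of_hasDerivAt (f := fun s : ℝ => Real.exp (-ν * (T - s)) / ν)
      · intro t _
        have : HasDerivAt (fun s : ℝ => -ν * (T - s)) ν t := by
          simpa using ((hasDerivAt_id t).const_sub T).const_mul (-ν)
        simpa [mul_div_assoc, div_self hν.ne'] using
          ((Real.hasDerivAt_exp _).comp t this).div_const ν
      · exact ((hexp 0).intervalIntegrable 0 T)
    rw [hftc]
    simp only [sub_self, mul_zero, Real.exp_zero, sub_zero]
    have : 0 < Real.exp (-ν * T) / ν := by positivity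
    rw [one_div]
    linarith
  calc (∫ s in (0:ℝ)..T, c * Real.exp (-ν * (T - s)) * φ s)
      ≤ ∫ s in (0:ℝ)..T, (c * ε * (φ s) ^ 2 + c / (4 * ε) * Real.exp (-ν * (T - s))) := step1
    _ = c * ε * (∫ s in (0:ℝ)..T, (φ s) ^ 2)
        + c / (4 * ε) * ∫ s in (0:ℝ)..T, Real.exp (-ν * (T - s)) := by
        have i1 : IntervalIntegrable (fun s => c * ε * (φ s) ^ 2) MeasureTheory.volume 0 T := by
          apply ContinuousOn.intervalIntegrable
          rw [Set.uIcc_of_le hT.le]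
          exact continuous_const.continuousOn.mul (hφ.pow 2)
        rw [integral_add i1 (((hexp 0).intervalIntegrable 0 T).const_mul (c / (4 * ε))),
          intervalIntegral.integral_const_mul, intervalIntegral.integral_const_mul]
    _ ≤ c * ε * (∫ s in (0:ℝ)..T, (φ s) ^ 2) + c / (4 * ε) * (1 / ν) := by
        have : 0 < c / (4 * ε) := by positivity
        nlinarith [hint]
    _ = c * ε * (∫ s in (0:ℝ)..T, (φ s) ^ 2) + c / (4 * ε * ν) := by
        ring




lemma coercive_of_posdef {U : Type*} [NormedAddCommGroup U] [InnerProductSpace ℝ U]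
    [FiniteDimensional ℝ U] (Q : U →L[ℝ] U) (hQpos : ∀ u : U, u ≠ 0 → 0 < ⟪Q u, u⟫) :
    ∃ α : ℝ, 0 < α ∧ ∀ u : U, α * ‖u‖ ^ 2 ≤ ⟪Q u, u⟫ := by
  rcases subsingleton_or_nontrivial U with hU | hU
  · refine ⟨1, one_pos, fun u => ?_⟩
    have : u = 0 := Subsingleton.elim u 0
    simp [this]
  · have hne : (Metric.sphere (0:U) 1).Nonempty := NormedSpace.sphere_nonempty.2 zero_le_one
    have hcont : Continuous fun u : U => ⟪Q u, u⟫ := Q.continuous.inner continuous_id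
    obtain ⟨u₀, hu₀, hmin⟩ :=
      (isCompact_sphere (0:U) 1).exists_isMinOn hne hcont.continuousOn
    have hu₀norm : ‖u₀‖ = 1 := by simpa using hu₀
    have hm : 0 < ⟪Q u₀, u₀⟫ := hQpos u₀ (by
      intro h; rw [h, norm_zero] at hu₀norm; exact one_ne_zero hu₀norm.symm)
    refine ⟨⟪Q u₀, u₀⟫, hm, fun u => ?_⟩
    rcases eq_or_ne u 0 with rfl | hu
    · simp
    · have hr : (0:ℝ) < ‖u‖ := norm_pos_iff.2 hu
      set v := ‖u‖⁻¹ • u with hv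
      have hvnorm : v ∈ Metric.sphere (0:U) 1 := by
        simp [hv, norm_smul, abs_of_pos (inv_pos.2 hr), inv_mul_cancel₀ hr.ne']
      have h1 : ⟪Q u₀, u₀⟫ ≤ ⟪Q v, v⟫ := hmin hvnorm
      have h2 : ⟪Q v, v⟫ = ‖u‖⁻¹ * (‖u‖⁻¹ * ⟪Q u, u⟫) := by
        rw [hv, map_smul, real_inner_smul_left, real_inner_smul_right]
      rw [h2] at h1
      rw [← sub_nonneg]
      have h3 : ⟪Q u, u⟫ - ⟪Q u₀, u₀⟫ * ‖u‖ ^ 2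
          = (‖u‖⁻¹ * (‖u‖⁻¹ * ⟪Q u, u⟫) - ⟪Q u₀, u₀⟫) * ‖u‖ ^ 2 := by
        field_simp
      rw [h3]
      exact mul_nonneg (by linarith) (sq_nonneg _)

set_option synthInstance.maxHeartbeats 1000000 in
set_option maxHeartbeats 1000000 in
lemma adj_exp_norm {X : Type*} [NormedAddCommGroup X] [InnerProductSpace ℝ X]
    [FiniteDimensional ℝ X] (S : X →L[ℝ] X) (t : ℝ) :
    ‖exp (t • ContinuousLinearMap.adjoint S)‖ = ‖exp (t • S)‖ := by
  have h1 : t • ContinuousLinearMap.adjoint S = star (t • S) := by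
    rw [star_smul, star_trivial, ContinuousLinearMap.star_eq_adjoint]
  rw [h1, ← star_exp, norm_star]

lemma ode_est2 {X : Type*} [NormedAddCommGroup X] [NormedSpace ℝ X] [CompleteSpace X]
    (M : X →L[ℝ] X) (c ν ε : ℝ) (hc : 0 < c) (hν : 0 < ν) (hε : 0 < ε)
    (hM : ∀ t : ℝ, 0 ≤ t → ‖exp (t • M)‖ ≤ c * Real.exp (-ν * t))
    (T : ℝ) (hT : 0 < T) (y f : ℝ → X) (φ : ℝ → ℝ)
    (hf : ContinuousOn f (Set.Icc 0 T))
    (hφ : ContinuousOn φ (Set.Icc 0 T))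
    (hφ0 : ∀ s ∈ Set.Icc (0:ℝ) T, 0 ≤ φ s)
    (hb : ∀ s ∈ Set.Icc (0:ℝ) T, ‖f s‖ ≤ φ s)
    (hy : ∀ t ∈ Set.Icc (0:ℝ) T, HasDerivAt y (M (y t) + f t) t) :
    ‖y T‖ ≤ c * ‖y 0‖ + c * ε * (∫ s in (0:ℝ)..T, (φ s) ^ 2) + c / (4 * ε * ν) := by
  have h1 := ode_est M c ν hc hν hM T hT y f hf hy
  have hexp : Continuous fun s : ℝ => Real.exp (-ν * (T - s)) := by fun_prop
  have h2 : (∫ s in (0:ℝ)..T, c * Real.exp (-ν * (T - s)) * ‖f s‖) ≤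
      ∫ s in (0:ℝ)..T, c * Real.exp (-ν * (T - s)) * φ s := by
    apply integral_mono_on hT.le
    · apply ContinuousOn.intervalIntegrable
      rw [Set.uIcc_of_le hT.le]
      exact (continuous_const.mul hexp).continuousOn.mul hf.norm
    · apply ContinuousOn.intervalIntegrable
      rw [Set.uIcc_of_le hT.le]
      exact (continuous_const.mul hexp).continuousOn.mul hφ
    · intro s hs
      exact mul_le_mul_of_nonneg_left (hb s hs) (by positivity)
  have h3 := exp_young c ν ε T hc hν hε hT φ hφ hφ0
  linarith

lemma key_estimate
    {X U V : Type*}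
    [NormedAddCommGroup X] [InnerProductSpace ℝ X] [FiniteDimensional ℝ X]
    [NormedAddCommGroup U] [InnerProductSpace ℝ U] [FiniteDimensional ℝ U]
    [NormedAddCommGroup V] [InnerProductSpace ℝ V] [FiniteDimensional ℝ V]
    (A : X →L[ℝ] X) (B : U →L[ℝ] X) (C : X →L[ℝ] V) (Q Qinv : U →L[ℝ] U)
    (hQ1 : Q ∘L Qinv = 1)
    (α : ℝ) (hα : 0 < α) (hcoer : ∀ u : U, α * ‖u‖ ^ 2 ≤ ⟪Q u, u⟫)
    (K : X →L[ℝ] U) (L : V →L[ℝ] X) (c₀ ν : ℝ) (hc₀ : 0 < c₀) (hν : 0 < ν)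
    (hMy : ∀ t : ℝ, 0 ≤ t → ‖exp (t • (A + L ∘L C))‖ ≤ c₀ * Real.exp (-ν * t))
    (hMl : ∀ t : ℝ, 0 ≤ t →
      ‖exp (t • (ContinuousLinearMap.adjoint (A + B ∘L K)))‖ ≤ c₀ * Real.exp (-ν * t))
    (T : ℝ) (hT : 0 < T) (y lam : ℝ → X)
    (hy : ∀ t ∈ Set.Icc (0 : ℝ) T,
      HasDerivAt y (A (y t) + (B ∘L Qinv ∘L ContinuousLinearMap.adjoint B) (lam t)) t)
    (hlam : ∀ t ∈ Set.Icc (0 : ℝ) T,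
      HasDerivAt lam ((ContinuousLinearMap.adjoint C ∘L C) (y t)
        - ContinuousLinearMap.adjoint A (lam t)) t)
    (hnorm : ‖y 0‖ + ‖lam T‖ ≤ 1) :
    ‖y T‖ + ‖lam 0‖ ≤ 2 * c₀ + 4 * c₀ ^ 2 * (2 * (1 + 1 / α)) *
      (‖B‖ + ‖L‖ + ‖ContinuousLinearMap.adjoint K‖ * ‖Q‖
        + ‖ContinuousLinearMap.adjoint C‖ + 1) ^ 2 / ν := by
  set β : ℝ := ‖B‖ + ‖L‖ + ‖ContinuousLinearMap.adjoint K‖ * ‖Q‖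
      + ‖ContinuousLinearMap.adjoint C‖ + 1 with hβdef
  have hβ1 : (1:ℝ) ≤ β := by
    have h1 := norm_nonneg B; have h2 := norm_nonneg L
    have h3 := norm_nonneg (ContinuousLinearMap.adjoint K)
    have h4 := norm_nonneg Q
    have h5 := norm_nonneg (ContinuousLinearMap.adjoint C)
    have := mul_nonneg h3 h4
    rw [hβdef]; linarith
  have hβ0 : (0:ℝ) < β := lt_of_lt_of_le one_pos hβ1
  set γ : ℝ := 2 * (1 + 1 / α) with hγdef
  have hγ0 : 0 < γ := by rw [hγdef]; positivity
  set ε : ℝ := 1 / (4 * c₀ * γ * β ^ 2) with hεdef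
  have hε : 0 < ε := by rw [hεdef]; positivity
  set uu : ℝ → U := fun t => Qinv (ContinuousLinearMap.adjoint B (lam t)) with huu
  have hQu : ∀ t : ℝ, ContinuousLinearMap.adjoint B (lam t) = Q (uu t) := by
    intro t
    have := congrArg (fun f : U →L[ℝ] U => f (ContinuousLinearMap.adjoint B (lam t))) hQ1
    simpa [huu] using this.symm
  have hycont : ContinuousOn y (Set.Icc 0 T) := fun t ht =>
    ((hy t ht).continuousAt).continuousWithinAt
  have hlamcont : ContinuousOn lam (Set.Icc 0 T) := fun t ht =>
    ((hlam t ht).continuousAt).continuousWithinAt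
  have hucont : ContinuousOn uu (Set.Icc 0 T) :=
    (Qinv.continuous.comp (ContinuousLinearMap.adjoint B).continuous).comp_continuousOn hlamcont
  have hCycont : ContinuousOn (fun s => C (y s)) (Set.Icc 0 T) :=
    C.continuous.comp_continuousOn hycont
  set φ : ℝ → ℝ := fun s => β * (‖uu s‖ + ‖C (y s)‖) with hφdef
  have hφcont : ContinuousOn φ (Set.Icc 0 T) :=
    continuous_const.continuousOn.mul (hucont.norm.add hCycont.norm)
  have hφ0 : ∀ s ∈ Set.Icc (0:ℝ) T, 0 ≤ φ s := fun s _ => by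
    have := norm_nonneg (uu s); have := norm_nonneg (C (y s))
    rw [hφdef]; positivity
  set G : ℝ → ℝ := fun s => ‖C (y s)‖ ^ 2 + ⟪Q (uu s), uu s⟫ with hGdef
  have hG0 : ∀ s : ℝ, 0 ≤ G s := by
    intro s
    have h1 := hcoer (uu s)
    have h2 : 0 ≤ α * ‖uu s‖ ^ 2 := by positivity
    have := sq_nonneg ‖C (y s)‖
    rw [hGdef]; dsimp only; nlinarith
  have hGcont : ContinuousOn G (Set.Icc 0 T) :=
    (hCycont.norm.pow 2).add ((Q.continuous.comp_continuousOn hucont).inner hucont)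
  -- FTC for the inner product
  have hF : ∀ t ∈ Set.Icc (0:ℝ) T, HasDerivAt (fun t => ⟪lam t, y t⟫) (G t) t := by
    intro t ht
    have h := (hlam t ht).inner (𝕜 := ℝ) (hy t ht)
    refine h.congr_deriv ?_
    rw [hGdef]
    dsimp only
    rw [inner_sub_left, inner_add_right]
    simp only [ContinuousLinearMap.comp_apply]
    rw [adjoint_inner_left, adjoint_inner_left, real_inner_self_eq_norm_sq]
    have h4 : ⟪lam t, B (Qinv (ContinuousLinearMap.adjoint B (lam t)))⟫
        = ⟪Q (uu t), uu t⟫ := by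
      rw [← hQu t, adjoint_inner_left]
    rw [h4]
    ring
  have hFTC : (∫ s in (0:ℝ)..T, G s) = ⟪lam T, y T⟫ - ⟪lam 0, y 0⟫ := by
    apply integral_eq_sub_of_hasDerivAt
    · intro t ht
      rw [Set.uIcc_of_le hT.le] at ht
      exact hF t ht
    · apply ContinuousOn.intervalIntegrable
      rwa [Set.uIcc_of_le hT.le]
  have hintG : (∫ s in (0:ℝ)..T, G s) ≤ ‖y T‖ + ‖lam 0‖ := by
    rw [hFTC]
    have h1 : ⟪lam T, y T⟫ ≤ ‖lam T‖ * ‖y T‖ := real_inner_le_norm _ _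
    have h2 : -⟪lam 0, y 0⟫ ≤ ‖lam 0‖ * ‖y 0‖ := by
      have := abs_real_inner_le_norm (lam 0) (y 0)
      have := neg_abs_le ⟪lam 0, y 0⟫
      linarith
    have h3 : ‖lam T‖ ≤ 1 := by have := norm_nonneg (y 0); linarith
    have h4 : ‖y 0‖ ≤ 1 := by have := norm_nonneg (lam T); linarith
    have h5 := norm_nonneg (y T); have h6 := norm_nonneg (lam 0)
    nlinarith
  -- bound φ² by G
  have hφG : ∀ s ∈ Set.Icc (0:ℝ) T, (φ s) ^ 2 ≤ γ * β ^ 2 * G s := by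
    intro s _
    rw [hφdef, hGdef, hγdef]
    dsimp only
    have h1 := hcoer (uu s)
    have h5' : (0:ℝ) < 1/α := by positivity
    have h2 : ‖uu s‖ ^ 2 ≤ (1/α) * ⟪Q (uu s), uu s⟫ := by
      have h := mul_le_mul_of_nonneg_left (hcoer (uu s)) h5'.le
      calc ‖uu s‖ ^ 2 = (1/α) * (α * ‖uu s‖ ^ 2) := by field_simp
        _ ≤ (1/α) * ⟪Q (uu s), uu s⟫ := h
    have h3 : (‖uu s‖ + ‖C (y s)‖) ^ 2 ≤ 2 * (‖uu s‖ ^ 2 + ‖C (y s)‖ ^ 2) := by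
      nlinarith [sq_nonneg (‖uu s‖ - ‖C (y s)‖)]
    have h4 : 0 ≤ ⟪Q (uu s), uu s⟫ := by nlinarith [hcoer (uu s), sq_nonneg ‖uu s‖]
    have h5 : (0:ℝ) < 1/α := by positivity
    have h6 := sq_nonneg ‖C (y s)‖
    have h7 := sq_nonneg β
    nlinarith [mul_le_mul_of_nonneg_left h3 (sq_nonneg β),
      mul_le_mul_of_nonneg_left h2 (mul_nonneg (by norm_num : (0:ℝ) ≤ 2) (sq_nonneg β)),
      mul_nonneg (sq_nonneg β) h4,
      mul_nonneg (mul_nonneg h5.le (sq_nonneg β)) h6]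
  have hintφ : (∫ s in (0:ℝ)..T, (φ s) ^ 2) ≤ γ * β ^ 2 * (‖y T‖ + ‖lam 0‖) := by
    have h1 : (∫ s in (0:ℝ)..T, (φ s) ^ 2) ≤ ∫ s in (0:ℝ)..T, γ * β ^ 2 * G s := by
      apply integral_mono_on hT.le
      · apply ContinuousOn.intervalIntegrable
        rw [Set.uIcc_of_le hT.le]; exact hφcont.pow 2
      · apply ContinuousOn.intervalIntegrable
        rw [Set.uIcc_of_le hT.le]; exact continuous_const.continuousOn.mul hGcont
      · exact hφG
    rw [intervalIntegral.integral_const_mul] at h1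
    have h2 : 0 ≤ γ * β ^ 2 := by positivity
    nlinarith [hintG]
  -- first estimate : forward equation for y
  set f₁ : ℝ → X := fun t => B (uu t) - L (C (y t)) with hf₁def
  have hf₁cont : ContinuousOn f₁ (Set.Icc 0 T) :=
    (B.continuous.comp_continuousOn hucont).sub (L.continuous.comp_continuousOn hCycont)
  have hb1 : ∀ s ∈ Set.Icc (0:ℝ) T, ‖f₁ s‖ ≤ φ s := by
    intro s _
    rw [hf₁def, hφdef]
    dsimp only
    calc ‖B (uu s) - L (C (y s))‖ ≤ ‖B (uu s)‖ + ‖L (C (y s))‖ := norm_sub_le _ _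
      _ ≤ ‖B‖ * ‖uu s‖ + ‖L‖ * ‖C (y s)‖ := add_le_add (B.le_opNorm _) (L.le_opNorm _)
      _ ≤ β * (‖uu s‖ + ‖C (y s)‖) := by
          have h1 : ‖B‖ ≤ β := by
            rw [hβdef]
            have := norm_nonneg L
            have := mul_nonneg (norm_nonneg (ContinuousLinearMap.adjoint K)) (norm_nonneg Q)
            have := norm_nonneg (ContinuousLinearMap.adjoint C)
            linarith
          have h2 : ‖L‖ ≤ β := by
            rw [hβdef]
            have := norm_nonneg B
            have := mul_nonneg (norm_nonneg (ContinuousLinearMap.adjoint K)) (norm_nonneg Q)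
            have := norm_nonneg (ContinuousLinearMap.adjoint C)
            linarith
          nlinarith [norm_nonneg (uu s), norm_nonneg (C (y s))]
  have hy1 : ∀ t ∈ Set.Icc (0:ℝ) T, HasDerivAt y ((A + L ∘L C) (y t) + f₁ t) t := by
    intro t ht
    convert hy t ht using 1
    rw [hf₁def, huu]
    simp only [ContinuousLinearMap.add_apply, ContinuousLinearMap.comp_apply]
    abel
  have est1 : ‖y T‖ ≤ c₀ * ‖y 0‖ + c₀ * ε * (∫ s in (0:ℝ)..T, (φ s) ^ 2)
      + c₀ / (4 * ε * ν) :=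
    ode_est2 (A + L ∘L C) c₀ ν ε hc₀ hν hε hMy T hT y f₁ φ hf₁cont hφcont hφ0 hb1 hy1
  -- second estimate : reversed adjoint equation for lam
  have hmaps : Set.MapsTo (fun s : ℝ => T - s) (Set.Icc 0 T) (Set.Icc 0 T) := by
    intro s hs
    simp only [Set.mem_Icc] at hs ⊢
    exact ⟨by linarith [hs.2], by linarith [hs.1]⟩
  set f₂ : ℝ → X := fun s =>
      -(ContinuousLinearMap.adjoint K (ContinuousLinearMap.adjoint B (lam (T - s))))
      - ContinuousLinearMap.adjoint C (C (y (T - s))) with hf₂def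
  have hTscont : Continuous fun s : ℝ => T - s := by fun_prop
  have hlamTs : ContinuousOn (fun s => lam (T - s)) (Set.Icc 0 T) :=
    hlamcont.comp hTscont.continuousOn hmaps
  have hyTs : ContinuousOn (fun s => y (T - s)) (Set.Icc 0 T) :=
    hycont.comp hTscont.continuousOn hmaps
  have hf₂cont : ContinuousOn f₂ (Set.Icc 0 T) := by
    apply ContinuousOn.sub
    · exact (((ContinuousLinearMap.adjoint K).continuous.comp
        (ContinuousLinearMap.adjoint B).continuous).comp_continuousOn hlamTs).neg
    · exact ((ContinuousLinearMap.adjoint C).continuous.comp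
        C.continuous).comp_continuousOn hyTs
  set φ₂ : ℝ → ℝ := fun s => φ (T - s) with hφ₂def
  have hφ₂cont : ContinuousOn φ₂ (Set.Icc 0 T) := hφcont.comp hTscont.continuousOn hmaps
  have hφ₂0 : ∀ s ∈ Set.Icc (0:ℝ) T, 0 ≤ φ₂ s := fun s hs => hφ0 _ (hmaps hs)
  have hb2 : ∀ s ∈ Set.Icc (0:ℝ) T, ‖f₂ s‖ ≤ φ₂ s := by
    intro s _
    rw [hf₂def, hφ₂def, hφdef]
    dsimp only
    calc ‖-(ContinuousLinearMap.adjoint K (ContinuousLinearMap.adjoint B (lam (T - s))))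
          - ContinuousLinearMap.adjoint C (C (y (T - s)))‖
        ≤ ‖-(ContinuousLinearMap.adjoint K (ContinuousLinearMap.adjoint B (lam (T - s))))‖
          + ‖ContinuousLinearMap.adjoint C (C (y (T - s)))‖ := norm_sub_le _ _
      _ = ‖ContinuousLinearMap.adjoint K (Q (uu (T - s)))‖
          + ‖ContinuousLinearMap.adjoint C (C (y (T - s)))‖ := by rw [norm_neg, hQu]
      _ ≤ ‖ContinuousLinearMap.adjoint K‖ * (‖Q‖ * ‖uu (T - s)‖)
          + ‖ContinuousLinearMap.adjoint C‖ * ‖C (y (T - s))‖ := by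
          apply add_le_add _ (le_opNorm _ _)
          calc ‖ContinuousLinearMap.adjoint K (Q (uu (T - s)))‖
              ≤ ‖ContinuousLinearMap.adjoint K‖ * ‖Q (uu (T - s))‖ := le_opNorm _ _
            _ ≤ ‖ContinuousLinearMap.adjoint K‖ * (‖Q‖ * ‖uu (T - s)‖) :=
                mul_le_mul_of_nonneg_left (le_opNorm _ _) (norm_nonneg _)
      _ ≤ β * (‖uu (T - s)‖ + ‖C (y (T - s))‖) := by
          have h1 : ‖ContinuousLinearMap.adjoint K‖ * ‖Q‖ ≤ β := by
            rw [hβdef]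
            have := norm_nonneg B; have := norm_nonneg L
            have := norm_nonneg (ContinuousLinearMap.adjoint C)
            linarith
          have h2 : ‖ContinuousLinearMap.adjoint C‖ ≤ β := by
            rw [hβdef]
            have := norm_nonneg B; have := norm_nonneg L
            have := mul_nonneg (norm_nonneg (ContinuousLinearMap.adjoint K)) (norm_nonneg Q)
            linarith
          have := norm_nonneg (uu (T - s)); have := norm_nonneg (C (y (T - s)))
          nlinarith
  have hμ : ∀ s ∈ Set.Icc (0:ℝ) T, HasDerivAt (fun s => lam (T - s))
      ((ContinuousLinearMap.adjoint (A + B ∘L K)) (lam (T - s)) + f₂ s) s := by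
    intro s hs
    have hinner : HasDerivAt (fun s : ℝ => T - s) (-1) s := by
      simpa using (hasDerivAt_id s).const_sub T
    have houter := hlam (T - s) (hmaps hs)
    have h := houter.scomp s hinner
    refine h.congr_deriv ?_
    rw [hf₂def]
    simp only [map_add, adjoint_comp, ContinuousLinearMap.add_apply,
      ContinuousLinearMap.comp_apply, neg_one_smul, neg_sub]
    abel
  have est2 : ‖lam 0‖ ≤ c₀ * ‖lam T‖ + c₀ * ε * (∫ s in (0:ℝ)..T, (φ s) ^ 2)
      + c₀ / (4 * ε * ν) := by
    have h := ode_est2 (ContinuousLinearMap.adjoint (A + B ∘L K)) c₀ ν ε hc₀ hν hε hMl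
      T hT (fun s => lam (T - s)) f₂ φ₂ hf₂cont hφ₂cont hφ₂0 hb2 hμ
    have hsub : (∫ s in (0:ℝ)..T, (φ₂ s) ^ 2) = ∫ s in (0:ℝ)..T, (φ s) ^ 2 := by
      rw [hφ₂def]
      have := integral_comp_sub_left (a := (0:ℝ)) (b := T) (fun s => (φ s) ^ 2) T
      simpa using this
    rw [hsub] at h
    simpa using h
  -- combine
  have heq1 : c₀ * ε * (γ * β ^ 2) = 1 / 4 := by
    rw [hεdef]
    field_simp
  have heq2 : c₀ / (4 * ε * ν) = c₀ ^ 2 * γ * β ^ 2 / ν := by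
    rw [hεdef]
    field_simp
  have hc₀ε : 0 ≤ c₀ * ε := by positivity
  have h4 : c₀ * ε * (γ * β ^ 2 * (‖y T‖ + ‖lam 0‖))
      = (1/4) * (‖y T‖ + ‖lam 0‖) := by
    calc c₀ * ε * (γ * β ^ 2 * (‖y T‖ + ‖lam 0‖))
        = c₀ * ε * (γ * β ^ 2) * (‖y T‖ + ‖lam 0‖) := by ring
      _ = (1/4) * (‖y T‖ + ‖lam 0‖) := by rw [heq1]
  have hmul : c₀ * ε * (∫ s in (0:ℝ)..T, (φ s) ^ 2) ≤ (1/4) * (‖y T‖ + ‖lam 0‖) := by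
    have h5 := mul_le_mul_of_nonneg_left hintφ hc₀ε
    exact h5.trans (le_of_eq h4)
  have heq3 : 4 * c₀ ^ 2 * γ * β ^ 2 / ν = 4 * (c₀ ^ 2 * γ * β ^ 2 / ν) := by ring
  have hb1' := mul_le_mul_of_nonneg_left hnorm hc₀.le
  linarith [est1, est2, hmul, heq2, heq3, hb1']

theorem stmt8
    {X U V : Type*}
    [NormedAddCommGroup X] [InnerProductSpace ℝ X] [FiniteDimensional ℝ X]
    [NormedAddCommGroup U] [InnerProductSpace ℝ U] [FiniteDimensional ℝ U]
    [NormedAddCommGroup V] [InnerProductSpace ℝ V] [FiniteDimensional ℝ V]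
    (A : X →L[ℝ] X) (B : U →L[ℝ] X) (C : X →L[ℝ] V) (Q Qinv : U →L[ℝ] U)
    (hQsa : ContinuousLinearMap.adjoint Q = Q)
    (hQpos : ∀ u : U, u ≠ 0 → 0 < ⟪Q u, u⟫)
    (hQ1 : Q ∘L Qinv = 1) (hQ2 : Qinv ∘L Q = 1)
    -- (A,B) exponentially stabilizable: A + BK is Hurwitz for some K
    (hstab : ∃ (K : X →L[ℝ] U) (c ν : ℝ), 0 < c ∧ 0 < ν ∧
      ∀ t : ℝ, 0 ≤ t → ‖NormedSpace.exp (t • (A + B ∘L K))‖ ≤ c * Real.exp (-ν * t))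
    -- (A,C) exponentially detectable: A + LC is Hurwitz for some L
    (hdet : ∃ (L : V →L[ℝ] X) (c ν : ℝ), 0 < c ∧ 0 < ν ∧
      ∀ t : ℝ, 0 ≤ t → ‖NormedSpace.exp (t • (A + L ∘L C))‖ ≤ c * Real.exp (-ν * t)) :
    ∃ c : ℝ, 0 < c ∧ ∀ T : ℝ, 0 < T → ∀ y lam : ℝ → X,
      (∀ t ∈ Set.Icc (0 : ℝ) T,
        HasDerivAt y (A (y t) + (B ∘L Qinv ∘L ContinuousLinearMap.adjoint B) (lam t)) t) →
      (∀ t ∈ Set.Icc (0 : ℝ) T,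
        HasDerivAt lam ((ContinuousLinearMap.adjoint C ∘L C) (y t)
          - ContinuousLinearMap.adjoint A (lam t)) t) →
      ‖y T‖ + ‖lam 0‖ ≤ c * (‖y 0‖ + ‖lam T‖) := by
  obtain ⟨K, c₁, ν₁, hc₁, hν₁, hK⟩ := hstab
  obtain ⟨L, c₂, ν₂, hc₂, hν₂, hL⟩ := hdet
  obtain ⟨α, hα, hcoer⟩ := coercive_of_posdef Q hQpos
  set c₀ : ℝ := max c₁ c₂ with hc₀def
  set ν : ℝ := min ν₁ ν₂ with hνdef
  have hc₀ : 0 < c₀ := lt_of_lt_of_le hc₁ (le_max_left _ _)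
  have hν0 : 0 < ν := lt_min hν₁ hν₂
  have hMy : ∀ t : ℝ, 0 ≤ t → ‖exp (t • (A + L ∘L C))‖ ≤ c₀ * Real.exp (-ν * t) := by
    intro t ht
    refine (hL t ht).trans ?_
    have h1 : Real.exp (-ν₂ * t) ≤ Real.exp (-ν * t) := by
      apply Real.exp_le_exp.2
      have := min_le_right ν₁ ν₂
      nlinarith
    calc c₂ * Real.exp (-ν₂ * t) ≤ c₀ * Real.exp (-ν₂ * t) :=
        mul_le_mul_of_nonneg_right (le_max_right _ _) (Real.exp_pos _).le
      _ ≤ c₀ * Real.exp (-ν * t) := mul_le_mul_of_nonneg_left h1 hc₀.le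
  have hMl : ∀ t : ℝ, 0 ≤ t →
      ‖exp (t • (ContinuousLinearMap.adjoint (A + B ∘L K)))‖ ≤ c₀ * Real.exp (-ν * t) := by
    intro t ht
    rw [adj_exp_norm]
    refine (hK t ht).trans ?_
    have h1 : Real.exp (-ν₁ * t) ≤ Real.exp (-ν * t) := by
      apply Real.exp_le_exp.2
      have := min_le_left ν₁ ν₂
      nlinarith
    calc c₁ * Real.exp (-ν₁ * t) ≤ c₀ * Real.exp (-ν₁ * t) :=
        mul_le_mul_of_nonneg_right (le_max_left _ _) (Real.exp_pos _).le
      _ ≤ c₀ * Real.exp (-ν * t) := mul_le_mul_of_nonneg_left h1 hc₀.le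
  set Kc : ℝ := 2 * c₀ + 4 * c₀ ^ 2 * (2 * (1 + 1 / α)) *
      (‖B‖ + ‖L‖ + ‖ContinuousLinearMap.adjoint K‖ * ‖Q‖
        + ‖ContinuousLinearMap.adjoint C‖ + 1) ^ 2 / ν with hKcdef
  have hKc : 0 < Kc := by
    rw [hKcdef]
    have h1 : (0:ℝ) < 2 * (1 + 1 / α) := by positivity
    have h2 : (0:ℝ) ≤ 4 * c₀ ^ 2 * (2 * (1 + 1 / α)) *
        (‖B‖ + ‖L‖ + ‖ContinuousLinearMap.adjoint K‖ * ‖Q‖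
          + ‖ContinuousLinearMap.adjoint C‖ + 1) ^ 2 / ν := by positivity
    linarith
  refine ⟨Kc, hKc, ?_⟩
  intro T hT y lam hy hlam
  have scaled : ∀ r : ℝ, 0 < r → r * (‖y 0‖ + ‖lam T‖) ≤ 1 →
      r * (‖y T‖ + ‖lam 0‖) ≤ Kc := by
    intro r hr hle
    have hy' : ∀ t ∈ Set.Icc (0:ℝ) T, HasDerivAt (fun t => r • y t)
        (A (r • y t) + (B ∘L Qinv ∘L ContinuousLinearMap.adjoint B) (r • lam t)) t := by
      intro t ht
      have h := (hy t ht).const_smul r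
      refine h.congr_deriv ?_
      rw [map_smul, map_smul, smul_add]
    have hlam' : ∀ t ∈ Set.Icc (0:ℝ) T, HasDerivAt (fun t => r • lam t)
        ((ContinuousLinearMap.adjoint C ∘L C) (r • y t)
          - ContinuousLinearMap.adjoint A (r • lam t)) t := by
      intro t ht
      have h := (hlam t ht).const_smul r
      refine h.congr_deriv ?_
      rw [map_smul, map_smul, smul_sub]
    have hnorm' : ‖r • y 0‖ + ‖r • lam T‖ ≤ 1 := by
      rw [norm_smul, norm_smul, Real.norm_eq_abs, abs_of_pos hr]
      calc r * ‖y 0‖ + r * ‖lam T‖ = r * (‖y 0‖ + ‖lam T‖) := by ring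
        _ ≤ 1 := hle
    have h := key_estimate A B C Q Qinv hQ1 α hα hcoer K L c₀ ν hc₀ hν0 hMy hMl
      T hT (fun t => r • y t) (fun t => r • lam t) hy' hlam' hnorm'
    have heq : ‖r • y T‖ + ‖r • lam 0‖ = r * (‖y T‖ + ‖lam 0‖) := by
      rw [norm_smul, norm_smul, Real.norm_eq_abs, abs_of_pos hr]
      ring
    rw [heq] at h
    rw [hKcdef]
    exact h
  by_cases hb : 0 < ‖y 0‖ + ‖lam T‖
  · have h := scaled (‖y 0‖ + ‖lam T‖)⁻¹ (inv_pos.2 hb) (by rw [inv_mul_cancel₀ hb.ne'])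
    have h2 := mul_le_mul_of_nonneg_left h hb.le
    have h3 : (‖y 0‖ + ‖lam T‖) * ((‖y 0‖ + ‖lam T‖)⁻¹ * (‖y T‖ + ‖lam 0‖))
        = ‖y T‖ + ‖lam 0‖ := by field_simp
    rw [h3] at h2
    linarith [h2]
  · push_neg at hb
    have hb0 : ‖y 0‖ + ‖lam T‖ = 0 :=
      le_antisymm hb (by positivity)
    have ha : ‖y T‖ + ‖lam 0‖ ≤ 0 := by
      by_contra hpos
      push_neg at hpos
      have hr : 0 < (Kc + 1) * (‖y T‖ + ‖lam 0‖)⁻¹ := by positivity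
      have h := scaled _ hr (by rw [hb0, mul_zero]; norm_num)
      have heq : (Kc + 1) * (‖y T‖ + ‖lam 0‖)⁻¹ * (‖y T‖ + ‖lam 0‖) = Kc + 1 := by
        field_simp
      rw [heq] at h
      linarith
    rw [hb0, mul_zero]
    exact ha
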